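/- Let d be a degree sequence of a finite simple graph and suppose a realization R of d contains a dial configuration D_n with n ≥ 2: that is, there exist distinct vertices u, v, w_1, ..., w_n such that u is adjacent to w_1 and to no other w_i, v is adjacent to every w_i except w_1. Then there exist n distinct labeled realizations of d (including R) that are pairwise related by a single 2-switch. -/

import Mathlib

/-- Two unordered vertex pairs {a,b} and {c,d} are equal. -/
def pairEq {V : Type*} (a b c d : V) : Prop := (a = c ∧ b = d) ∨ (a = d ∧ b = c)

/-- `G'` is obtained from `G` by the 2-switch on the alternating 4-cycle `[u,v : w,x]`:
`uv, wx` are edges of `G`, `ux, vw` are non-edges, the four vertices are distinct, and the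
adjacency of exactly these four pairs is toggled. -/
def IsTwoSwitchAt {V : Type*} (G G' : SimpleGraph V) (u v w x : V) : Prop :=
  u ≠ v ∧ u ≠ w ∧ u ≠ x ∧ v ≠ w ∧ v ≠ x ∧ w ≠ x ∧
  G.Adj u v ∧ G.Adj w x ∧ ¬ G.Adj u x ∧ ¬ G.Adj v w ∧
  ∀ a b, G'.Adj a b ↔
    Xor' (G.Adj a b) (pairEq a b u v ∨ pairEq a b w x ∨ pairEq a b u x ∨ pairEq a b v w)

/-- `G'` is obtained from `G` by a single 2-switch. -/
def IsTwoSwitch {V : Type*} (G G' : SimpleGraph V) : Prop :=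
  ∃ u v w x, IsTwoSwitchAt G G' u v w x

/-- The degree of `y` in `G`, as the number of neighbors. -/
noncomputable def ndeg {V : Type*} (G : SimpleGraph V) (y : V) : ℕ := (G.neighborSet y).ncard

namespace DialAux
variable {V : Type*}

lemma pairEq_symm {a b c d : V} : pairEq b a c d ↔ pairEq a b c d := by
  unfold pairEq; tauto

lemma pairEq_comm {a b c d : V} : pairEq a b d c ↔ pairEq a b c d := by
  unfold pairEq; tauto

lemma pairEq_self {a c d : V} (h : pairEq a a c d) : c = d := by
  rcases h with ⟨rfl, rfl⟩ | ⟨rfl, rfl⟩ <;> rfl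

lemma pairEq_excl {a b c d c' d' : V}
    (h : (c ≠ c' ∧ c ≠ d') ∨ (d ≠ c' ∧ d ≠ d')) :
    ¬ (pairEq a b c d ∧ pairEq a b c' d') := by
  rintro ⟨⟨rfl, rfl⟩ | ⟨rfl, rfl⟩, ⟨h1, h2⟩ | ⟨h1, h2⟩⟩ <;> tauto

lemma xor_left {p q : Prop} : p ↔ Xor' (Xor' p q) q := by
  unfold Xor' Xor; tauto

lemma xor_lift {r qi qj pp : Prop} (h : qj ↔ Xor' qi pp) :
    Xor' r qj ↔ Xor' (Xor' r qi) pp := by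
  unfold Xor' Xor at *; tauto

/-- Toggled pairs of the dial 2-switch moving `u`'s neighbor from `p` to `q`
(and `v`'s non-neighbor from `p` to `q`). -/
def switchPred (u v p q a b : V) : Prop :=
  pairEq a b u p ∨ pairEq a b v q ∨ pairEq a b u q ∨ pairEq a b v p

def dialSwitch (R : SimpleGraph V) (u v p q : V) : SimpleGraph V where
  Adj a b := a ≠ b ∧ Xor' (R.Adj a b) (switchPred u v p q a b)
  symm := ⟨by
    rintro a b ⟨hab, h⟩
    refine ⟨hab.symm, ?_⟩
    rw [R.adj_comm]
    have : switchPred u v p q b a ↔ switchPred u v p q a b := by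
      unfold switchPred; simp only [pairEq_symm]
    rwa [this]⟩
  loopless := ⟨by rintro a ⟨h, -⟩; exact h rfl⟩

lemma dialSwitch_adj {R : SimpleGraph V} {u v p q a b : V} :
    (dialSwitch R u v p q).Adj a b ↔ a ≠ b ∧ Xor' (R.Adj a b) (switchPred u v p q a b) :=
  Iff.rfl

lemma ndeg_congr [Fintype V] {G G' : SimpleGraph V} {y : V}
    (h : ∀ b, G'.Adj y b ↔ G.Adj y b) : ndeg G' y = ndeg G y := by
  unfold ndeg
  congr 1
  ext b
  simpa [SimpleGraph.mem_neighborSet] using h b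

/-- If `y`'s adjacency is toggled exactly at `d` (an old neighbor) and `c` (an old
non-neighbor), the degree is unchanged. -/
lemma ndeg_toggle [Fintype V] {G G' : SimpleGraph V} {y c d : V}
    (hadj : ∀ b, G'.Adj y b ↔ Xor' (G.Adj y b) (b = d ∨ b = c))
    (hc : ¬ G.Adj y c) (hd : G.Adj y d) : ndeg G' y = ndeg G y := by
  have hcd : c ≠ d := fun h => hc (h ▸ hd)
  have hset : G'.neighborSet y = insert c (G.neighborSet y) \ {d} := by
    ext b
    simp only [SimpleGraph.mem_neighborSet, Set.mem_diff, Set.mem_insert_iff,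
      Set.mem_singleton_iff, hadj b]
    by_cases h1 : b = d <;> by_cases h2 : b = c <;> subst_vars <;>
      simp_all [Xor', Xor]
  unfold ndeg
  rw [hset]
  have hcN : c ∉ G.neighborSet y := hc
  have hdN : d ∈ insert c (G.neighborSet y) := Or.inr hd
  rw [Set.ncard_diff_singleton_of_mem hdN, Set.ncard_insert_of_notMem hcN]
  omega

lemma twoSwitchAt_ndeg [Fintype V] {G G' : SimpleGraph V} {u v w x : V}
    (h : IsTwoSwitchAt G G' u v w x) : ∀ y, ndeg G' y = ndeg G y := by
  obtain ⟨huv, huw, hux, hvw, hvx, hwx, e1, e2, n1, n2, hadj⟩ := h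
  have huv' := huv.symm; have huw' := huw.symm; have hux' := hux.symm
  have hvw' := hvw.symm; have hvx' := hvx.symm; have hwx' := hwx.symm
  intro y
  by_cases hyu : y = u
  · rw [hyu]
    refine ndeg_toggle (c := x) (d := v) (fun b => ?_) n1 e1
    rw [hadj u b]
    have : (pairEq u b u v ∨ pairEq u b w x ∨ pairEq u b u x ∨ pairEq u b v w)
        ↔ (b = v ∨ b = x) := by
      simp [pairEq, huv, huw, hux]
    rw [this]
  · by_cases hyv : y = v
    · rw [hyv]
      refine ndeg_toggle (c := w) (d := u) (fun b => ?_) n2 e1.symm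
      rw [hadj v b]
      have : (pairEq v b u v ∨ pairEq v b w x ∨ pairEq v b u x ∨ pairEq v b v w)
          ↔ (b = u ∨ b = w) := by
        simp [pairEq, huv', hvw, hvx]
      rw [this]
    · by_cases hyw : y = w
      · rw [hyw]
        refine ndeg_toggle (c := v) (d := x) (fun b => ?_) (fun hc => n2 hc.symm) e2
        rw [hadj w b]
        have : (pairEq w b u v ∨ pairEq w b w x ∨ pairEq w b u x ∨ pairEq w b v w)
            ↔ (b = x ∨ b = v) := by
          simp [pairEq, huw', hvw', hwx]
        rw [this]
      · by_cases hyx : y = x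
        · rw [hyx]
          refine ndeg_toggle (c := u) (d := w) (fun b => ?_) (fun hc => n1 hc.symm) e2.symm
          rw [hadj x b]
          have : (pairEq x b u v ∨ pairEq x b w x ∨ pairEq x b u x ∨ pairEq x b v w)
              ↔ (b = w ∨ b = u) := by
            simp [pairEq, hux', hvx', hwx']
          rw [this]
        · refine ndeg_congr (fun b => ?_)
          rw [hadj y b]
          have : (pairEq y b u v ∨ pairEq y b w x ∨ pairEq y b u x ∨ pairEq y b v w)
              ↔ False := by
            simp [pairEq, hyu, hyv, hyw, hyx]
          rw [this]
          simp [Xor', Xor]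

lemma twoSwitchAt_symm {G G' : SimpleGraph V} {u v w x : V}
    (h : IsTwoSwitchAt G G' u v w x) : IsTwoSwitchAt G' G u x w v := by
  obtain ⟨huv, huw, hux, hvw, hvx, hwx, e1, e2, n1, n2, hadj⟩ := h
  have hP : ∀ a b : V, (pairEq a b u x ∨ pairEq a b w v ∨ pairEq a b u v ∨ pairEq a b x w)
      ↔ (pairEq a b u v ∨ pairEq a b w x ∨ pairEq a b u x ∨ pairEq a b v w) := by
    intro a b
    rw [show pairEq a b w v ↔ pairEq a b v w from pairEq_comm,
      show pairEq a b x w ↔ pairEq a b w x from pairEq_comm]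
    tauto
  refine ⟨hux, huw, huv, hwx.symm, hvx.symm, hvw.symm, ?_, ?_, ?_, ?_, ?_⟩
  · rw [hadj u x]
    exact Or.inr ⟨Or.inr (Or.inr (Or.inl (Or.inl ⟨rfl, rfl⟩))), n1⟩
  · rw [hadj w v]
    exact Or.inr ⟨Or.inr (Or.inr (Or.inr (Or.inr ⟨rfl, rfl⟩))), fun h => n2 h.symm⟩
  · rw [hadj u v]
    rintro (⟨-, hP'⟩ | ⟨-, hR⟩)
    · exact hP' (Or.inl (Or.inl ⟨rfl, rfl⟩))
    · exact hR e1
  · rw [hadj x w]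
    rintro (⟨-, hP'⟩ | ⟨-, hR⟩)
    · exact hP' (Or.inr (Or.inl (Or.inr ⟨rfl, rfl⟩)))
    · exact hR e2.symm
  · intro a b
    rw [hadj a b, hP a b]
    exact xor_left

end DialAux

open DialAux

/-- if a realization `R` contains the dial configuration `D_n` (`n ≥ 2`), i.e.
distinct vertices `u, v, w i` with `u` adjacent to `w i₀` and no other `w i`, and `v` adjacent
to every `w i` except `w i₀`, then there are `n` distinct graphs with the same degrees as `R`
(one of which is `R` itself) that are pairwise related by a single 2-switch. -/
theorem dial_config_gives_clique {V : Type*} [Fintype V] (R : SimpleGraph V)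
    (n : ℕ) (hn : 2 ≤ n) (u v : V) (w : Fin n → V) (i₀ : Fin n)
    (hw : Function.Injective w) (huv : u ≠ v)
    (hu : ∀ i, u ≠ w i) (hv : ∀ i, v ≠ w i)
    (h1 : R.Adj u (w i₀)) (h2 : ∀ i, i ≠ i₀ → ¬ R.Adj u (w i))
    (h3 : ¬ R.Adj v (w i₀)) (h4 : ∀ i, i ≠ i₀ → R.Adj v (w i)) :
    ∃ f : Fin n → SimpleGraph V, Function.Injective f ∧ (∃ i, f i = R) ∧
      (∀ i, ∀ y : V, ndeg (f i) y = ndeg R y) ∧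
      (∀ i j, i ≠ j → IsTwoSwitch (f i) (f j)) := by
  classical
  -- K1 : the dial switch is a 2-switch from R
  have K1 : ∀ i : Fin n, i ≠ i₀ →
      IsTwoSwitchAt R (dialSwitch R u v (w i₀) (w i)) u (w i₀) v (w i) := by
    intro i hi
    have hpi : w i₀ ≠ w i := fun h => hi (hw h).symm
    refine ⟨hu i₀, huv, hu i, (hv i₀).symm, hpi, hv i,
      h1, h4 i hi, h2 i hi, fun h => h3 h.symm, ?_⟩
    intro a b
    rw [dialSwitch_adj]
    have hPP : (pairEq a b u (w i₀) ∨ pairEq a b v (w i) ∨ pairEq a b u (w i) ∨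
        pairEq a b (w i₀) v) ↔ switchPred u v (w i₀) (w i) a b := by
      unfold switchPred
      rw [show pairEq a b (w i₀) v ↔ pairEq a b v (w i₀) from pairEq_comm]
    rw [hPP]
    constructor
    · rintro ⟨-, hx⟩
      exact hx
    · intro hx
      have hab : a ≠ b := by
        rintro rfl
        have hx' := hx
        unfold Xor' at hx'
        rcases hx' with ⟨hR, -⟩ | ⟨hP, -⟩
        · exact R.loopless.irrefl a hR
        · rcases hP with h | h | h | h
          · exact hu i₀ (pairEq_self h)
          · exact hv i (pairEq_self h)
          · exact hu i (pairEq_self h)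
          · exact hv i₀ (pairEq_self h)
      exact ⟨hab, hx⟩
  -- adjacency of u with the w's in the switched graphs
  have hfu : ∀ k l : Fin n, k ≠ i₀ →
      ((dialSwitch R u v (w i₀) (w k)).Adj u (w l) ↔ l = k) := by
    intro k l hk
    rw [dialSwitch_adj]
    unfold Xor' switchPred pairEq
    constructor
    · rintro ⟨-, ⟨hR, hP⟩ | ⟨hP, hR⟩⟩
      · exfalso
        have hl : l = i₀ := by by_contra hl; exact h2 l hl hR
        exact hP (Or.inl (Or.inl ⟨rfl, by rw [hl]⟩))
      · rcases hP with (⟨-, h⟩ | ⟨h, -⟩) | (⟨h, -⟩ | ⟨h, -⟩) | (⟨-, h⟩ | ⟨h, -⟩) | (⟨h, -⟩ | ⟨h, -⟩)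
        · exact absurd (by rw [hw h]; exact h1) hR
        · exact absurd h (hu i₀)
        · exact absurd h huv
        · exact absurd h (hu k)
        · exact hw h
        · exact absurd h (hu k)
        · exact absurd h huv
        · exact absurd h (hu i₀)
    · rintro rfl
      exact ⟨hu l, Or.inr ⟨Or.inr (Or.inr (Or.inl (Or.inl ⟨rfl, rfl⟩))), h2 l hk⟩⟩
  -- adjacency of v with the w's in the switched graphs
  have hfv : ∀ k l : Fin n, k ≠ i₀ →
      ((dialSwitch R u v (w i₀) (w k)).Adj v (w l) ↔ l ≠ k) := by
    intro k l hk
    rw [dialSwitch_adj]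
    unfold Xor' switchPred pairEq
    constructor
    · rintro ⟨-, ⟨hR, hP⟩ | ⟨hP, hR⟩⟩
      · intro hlk
        exact hP (Or.inr (Or.inl (Or.inl ⟨rfl, by rw [hlk]⟩)))
      · rcases hP with (⟨h, -⟩ | ⟨h, -⟩) | (⟨-, h⟩ | ⟨h, -⟩) | (⟨h, -⟩ | ⟨h, -⟩) | (⟨-, h⟩ | ⟨h, -⟩)
        · exact absurd h.symm huv
        · exact absurd h (hv i₀)
        · exact (hR (by rw [hw h]; exact h4 k hk)).elim
        · exact absurd h (hv k)
        · exact absurd h.symm huv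
        · exact absurd h (hv k)
        · exact fun hlk => hk (hlk ▸ hw h)
        · exact absurd h (hv i₀)
    · intro hl
      by_cases hli : l = i₀
      · refine ⟨hv l, Or.inr ⟨Or.inr (Or.inr (Or.inr (Or.inl ⟨rfl, by rw [hli]⟩))), ?_⟩⟩
        rw [hli]; exact h3
      · refine ⟨hv l, Or.inl ⟨h4 l hli, ?_⟩⟩
        rintro ((⟨h, -⟩ | ⟨h, -⟩) | (⟨-, h⟩ | ⟨h, -⟩) | (⟨h, -⟩ | ⟨h, -⟩) | (⟨-, h⟩ | ⟨h, -⟩))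
        · exact huv h.symm
        · exact hv i₀ h
        · exact hl (hw h)
        · exact hv k h
        · exact huv h.symm
        · exact hv k h
        · exact hli (hw h)
        · exact hv i₀ h
  -- K2 : two distinct dial switches are related by a 2-switch
  have K2 : ∀ i j : Fin n, i ≠ i₀ → j ≠ i₀ → i ≠ j →
      IsTwoSwitchAt (dialSwitch R u v (w i₀) (w i)) (dialSwitch R u v (w i₀) (w j))
        u (w i) v (w j) := by
    intro i j hi hj hij
    have hij' : w i ≠ w j := fun h => hij (hw h)
    have hpi : w i₀ ≠ w i := fun h => hi (hw h).symm
    have hpj : w i₀ ≠ w j := fun h => hj (hw h).symm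
    refine ⟨hu i, huv, hu j, (hv i).symm, hij', hv j,
      (hfu i i hi).mpr rfl, (hfv i j hi).mpr (fun h => hij h.symm),
      fun h => (hfu i j hi).mp h |> (fun h' => hij h'.symm),
      fun h => ((hfv i i hi).mp ((dialSwitch R u v (w i₀) (w i)).adj_symm h)) rfl, ?_⟩
    intro a b
    by_cases hab : a = b
    · subst hab
      constructor
      · rintro ⟨h, -⟩
        exact absurd rfl h
      · intro hx
        unfold Xor' at hx
        rcases hx with ⟨⟨h, -⟩, -⟩ | ⟨hP, -⟩
        · exact absurd rfl h
        · rcases hP with h | h | h | h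
          · exact (hu i (pairEq_self h)).elim
          · exact (hv j (pairEq_self h)).elim
          · exact (hu j (pairEq_self h)).elim
          · exact (hv i (pairEq_self h).symm).elim
    · -- the real case: a ≠ b
      have eABi : ¬(pairEq a b u (w i₀) ∧ pairEq a b v (w i)) := pairEq_excl (Or.inl ⟨huv, hu i⟩)
      have eACi : ¬(pairEq a b u (w i₀) ∧ pairEq a b u (w i)) := pairEq_excl (Or.inr ⟨(hu i₀).symm, hpi⟩)
      have eAD : ¬(pairEq a b u (w i₀) ∧ pairEq a b v (w i₀)) := pairEq_excl (Or.inl ⟨huv, hu i₀⟩)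
      have eABj : ¬(pairEq a b u (w i₀) ∧ pairEq a b v (w j)) := pairEq_excl (Or.inl ⟨huv, hu j⟩)
      have eACj : ¬(pairEq a b u (w i₀) ∧ pairEq a b u (w j)) := pairEq_excl (Or.inr ⟨(hu i₀).symm, hpj⟩)
      have eBiCi : ¬(pairEq a b v (w i) ∧ pairEq a b u (w i)) := pairEq_excl (Or.inl ⟨huv.symm, hv i⟩)
      have eBiD : ¬(pairEq a b v (w i) ∧ pairEq a b v (w i₀)) := pairEq_excl (Or.inr ⟨(hv i).symm, hpi.symm⟩)
      have eBiBj : ¬(pairEq a b v (w i) ∧ pairEq a b v (w j)) := pairEq_excl (Or.inr ⟨(hv i).symm, hij'⟩)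
      have eBiCj : ¬(pairEq a b v (w i) ∧ pairEq a b u (w j)) := pairEq_excl (Or.inl ⟨huv.symm, hv j⟩)
      have eCiD : ¬(pairEq a b u (w i) ∧ pairEq a b v (w i₀)) := pairEq_excl (Or.inl ⟨huv, hu i₀⟩)
      have eCiBj : ¬(pairEq a b u (w i) ∧ pairEq a b v (w j)) := pairEq_excl (Or.inl ⟨huv, hu j⟩)
      have eCiCj : ¬(pairEq a b u (w i) ∧ pairEq a b u (w j)) := pairEq_excl (Or.inr ⟨(hu i).symm, hij'⟩)
      have eDBj : ¬(pairEq a b v (w i₀) ∧ pairEq a b v (w j)) := pairEq_excl (Or.inr ⟨(hv i₀).symm, hpj⟩)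
      have eDCj : ¬(pairEq a b v (w i₀) ∧ pairEq a b u (w j)) := pairEq_excl (Or.inl ⟨huv.symm, hv j⟩)
      have eBjCj : ¬(pairEq a b v (w j) ∧ pairEq a b u (w j)) := pairEq_excl (Or.inl ⟨huv.symm, hv j⟩)
      have key : switchPred u v (w i₀) (w j) a b ↔
          Xor' (switchPred u v (w i₀) (w i) a b)
            (pairEq a b u (w i) ∨ pairEq a b v (w j) ∨ pairEq a b u (w j) ∨ pairEq a b v (w i)) := by
        unfold switchPred Xor'
        revert eABi eACi eAD eABj eACj eBiCi eBiD eBiBj eBiCj eCiD eCiBj eCiCj eDBj eDCj eBjCj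
        generalize pairEq a b u (w i₀) = A
        generalize pairEq a b v (w i) = Bi
        generalize pairEq a b u (w i) = Ci
        generalize pairEq a b v (w i₀) = D
        generalize pairEq a b v (w j) = Bj
        generalize pairEq a b u (w j) = Cj
        itauto
      rw [show pairEq a b (w i) v ↔ pairEq a b v (w i) from pairEq_comm]
      rw [dialSwitch_adj, dialSwitch_adj]
      simp only [ne_eq, hab, not_false_iff, true_and]
      exact xor_lift key
  -- assemble the family
  set f : Fin n → SimpleGraph V :=
    fun i => if i = i₀ then R else dialSwitch R u v (w i₀) (w i) with hf
  have hfi₀ : f i₀ = R := if_pos rfl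
  have hfne : ∀ i, i ≠ i₀ → f i = dialSwitch R u v (w i₀) (w i) := fun i hi => if_neg hi
  have hfu' : ∀ k l : Fin n, ((f k).Adj u (w l) ↔ l = k) := by
    intro k l
    by_cases hk : k = i₀
    · rw [hk, hfi₀]
      constructor
      · intro h
        by_contra hl
        exact h2 l hl h
      · rintro rfl
        exact h1
    · rw [hfne k hk]
      exact hfu k l hk
  refine ⟨f, ?_, ⟨i₀, hfi₀⟩, ?_, ?_⟩
  · intro a b hab
    have h := (hfu' a a).mpr rfl
    rw [hab] at h
    exact (hfu' b a).mp h
  · intro i y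
    by_cases hi : i = i₀
    · rw [hi, hfi₀]
    · rw [hfne i hi]
      exact twoSwitchAt_ndeg (K1 i hi) y
  · intro i j hij
    by_cases hi : i = i₀
    · have hj : j ≠ i₀ := fun h => hij (hi.trans h.symm)
      rw [hi, hfi₀, hfne j hj]
      exact ⟨u, w i₀, v, w j, K1 j hj⟩
    · by_cases hj : j = i₀
      · rw [hj, hfi₀, hfne i hi]
        exact ⟨u, w i, v, w i₀, twoSwitchAt_symm (K1 i hi)⟩
      · rw [hfne i hi, hfne j hj]
        exact ⟨u, w i, v, w j, K2 i j hi hj hij⟩
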